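/- Let E be a finite set, w ≥ 1 an integer, e ∈ E and X ∈ (0,1]^E with all coordinates strictly positive. If |E\{e}| ≥ w, then z·R_e(zX) increases monotonically to Q_e(X) = (Σ_{S ⊆ E\{e}, |S| = w−1} X^S)/(Σ_{S ⊆ E\{e}, |S| = w} X^S) as z → ∞. If |E\{e}| < w, then z·R_e(zX) → ∞ as z → ∞. -/

import Mathlib

open scoped Classical

open Finset Filter Topology



noncomputable def aa {α : Type*} [DecidableEq α] (F : Finset α) (X : α → ℝ) (k : ℕ) : ℝ :=
  ∑ S ∈ F.powersetCard k, ∏ f ∈ S, X f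

lemma aa_zero {α : Type*} [DecidableEq α] (F : Finset α) (X : α → ℝ) : aa F X 0 = 1 := by
  simp [aa]

lemma aa_nonneg {α : Type*} [DecidableEq α] {F : Finset α} {X : α → ℝ}
    (h : ∀ f ∈ F, 0 ≤ X f) (k : ℕ) : 0 ≤ aa F X k := by
  refine Finset.sum_nonneg fun S hS => Finset.prod_nonneg fun f hf => ?_
  exact h f ((Finset.mem_powersetCard.1 hS).1 hf)

lemma aa_pos {α : Type*} [DecidableEq α] {F : Finset α} {X : α → ℝ}
    (h : ∀ f ∈ F, 0 < X f) {k : ℕ} (hk : k ≤ F.card) : 0 < aa F X k := by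
  refine Finset.sum_pos (fun S hS => Finset.prod_pos fun f hf =>
    h f ((Finset.mem_powersetCard.1 hS).1 hf)) ?_
  exact Finset.powersetCard_nonempty.2 hk

lemma aa_insert {α : Type*} [DecidableEq α] {F : Finset α} {x : α} (hx : x ∉ F)
    (X : α → ℝ) (k : ℕ) :
    aa (insert x F) X (k+1) = aa F X (k+1) + X x * aa F X k := by
  unfold aa
  rw [Finset.powersetCard_succ_insert hx, Finset.sum_union, Finset.sum_image, Finset.mul_sum]
  · congr 1
    refine Finset.sum_congr rfl fun S hS => ?_
    have hxS : x ∉ S := fun hmem => hx ((Finset.mem_powersetCard.1 hS).1 hmem)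
    rw [Finset.prod_insert hxS]
  · intro S hS T hT hST
    have hxS : x ∉ S := fun hmem => hx ((Finset.mem_powersetCard.1 hS).1 hmem)
    have hxT : x ∉ T := fun hmem => hx ((Finset.mem_powersetCard.1 hT).1 hmem)
    have := congrArg (fun s => Finset.erase s x) hST
    simpa [Finset.erase_insert hxS, Finset.erase_insert hxT] using this
  · rw [Finset.disjoint_left]
    intro S hS hS'
    obtain ⟨T, hT, rfl⟩ := Finset.mem_image.1 hS'
    have : x ∈ F := (Finset.mem_powersetCard.1 hS).1 (Finset.mem_insert_self x T)
    exact hx this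

lemma aa_key {α : Type*} [DecidableEq α] (X : α → ℝ) :
    ∀ (F : Finset α), (∀ f ∈ F, 0 ≤ X f) →
    ∀ i j : ℕ, i ≤ j → aa F X i * aa F X (j+2) ≤ aa F X (i+1) * aa F X (j+1) := by
  intro F
  induction F using Finset.induction_on with
  | empty =>
      intro h i j hij
      have h2 : aa (∅ : Finset α) X (j+2) = 0 := by
        unfold aa
        rw [Finset.powersetCard_eq_empty.2 (by simp)]
        simp
      rw [h2, mul_zero]
      exact mul_nonneg (aa_nonneg h _) (aa_nonneg h _)
  | @insert x s hx ih =>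
      intro h i j hij
      have hs : ∀ f ∈ s, 0 ≤ X f := fun f hf => h f (Finset.mem_insert_of_mem hf)
      have hx0 : 0 ≤ X x := h x (Finset.mem_insert_self x s)
      have IH := ih hs
      -- gap-1 version for s
      have IH' : ∀ i j : ℕ, i ≤ j → aa s X i * aa s X (j+1) ≤ aa s X (i+1) * aa s X j := by
        intro i j hij
        rcases eq_or_lt_of_le hij with rfl | hlt
        · rw [mul_comm]
        · obtain ⟨j', rfl⟩ : ∃ j', j = j' + 1 := ⟨j - 1, by omega⟩
          exact IH i j' (by omega)
      have han : ∀ k, 0 ≤ aa s X k := aa_nonneg hs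
      match i, hij with
      | 0, hij =>
        have e0 : aa (insert x s) X 0 = 1 := aa_zero _ _
        have e1 : aa (insert x s) X 1 = aa s X 1 + X x * aa s X 0 := aa_insert hx X 0
        have e2 : aa (insert x s) X (j+2) = aa s X (j+2) + X x * aa s X (j+1) :=
          aa_insert hx X (j+1)
        have e3 : aa (insert x s) X (j+1) = aa s X (j+1) + X x * aa s X j := aa_insert hx X j
        have h1 := IH 0 j (by omega)
        rw [aa_zero] at h1
        have hz : aa s X 0 = 1 := aa_zero s X
        rw [e0, e1, e2, e3, hz]
        nlinarith [h1, mul_nonneg hx0 (mul_nonneg (han 1) (han j)),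
          mul_nonneg (mul_nonneg hx0 hx0) (han j)]
      | (i0+1), hij =>
        have e1 : aa (insert x s) X (i0+1) = aa s X (i0+1) + X x * aa s X i0 := aa_insert hx X i0
        have e2 : aa (insert x s) X (j+2) = aa s X (j+2) + X x * aa s X (j+1) :=
          aa_insert hx X (j+1)
        have e3 : aa (insert x s) X (i0+2) = aa s X (i0+2) + X x * aa s X (i0+1) :=
          aa_insert hx X (i0+1)
        have e4 : aa (insert x s) X (j+1) = aa s X (j+1) + X x * aa s X j := aa_insert hx X j
        obtain ⟨j0, rfl⟩ : ∃ j0, j = j0 + 1 := ⟨j - 1, by omega⟩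
        have h1 : aa s X (i0+1) * aa s X (j0+3) ≤ aa s X (i0+2) * aa s X (j0+2) :=
          IH (i0+1) (j0+1) (by omega)
        have h2 : aa s X i0 * aa s X (j0+2) ≤ aa s X (i0+1) * aa s X (j0+1) :=
          IH i0 j0 (by omega)
        have h3 : aa s X i0 * aa s X (j0+3) ≤ aa s X (i0+2) * aa s X (j0+1) := by
          calc aa s X i0 * aa s X (j0+3) ≤ aa s X (i0+1) * aa s X (j0+2) :=
                IH i0 (j0+1) (by omega)
            _ ≤ aa s X (i0+2) * aa s X (j0+1) := IH' (i0+1) (j0+1) (by omega)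
        rw [e1, e2, e3, e4]
        nlinarith [mul_le_mul_of_nonneg_left h3 hx0,
          mul_le_mul_of_nonneg_left h2 (mul_nonneg hx0 hx0)]

lemma sum_filter_card_le {α : Type*} [DecidableEq α] (F : Finset α) (Y : α → ℝ) (c : ℕ) (z : ℝ) :
    ∑ S ∈ F.powerset.filter (fun S => S.card ≤ c), ∏ f ∈ S, (z * Y f)
      = ∑ k ∈ Finset.range (c+1), z ^ k * aa F Y k := by
  have hset : F.powerset.filter (fun S => S.card ≤ c)
      = (Finset.range (c+1)).biUnion (fun k => F.powersetCard k) := by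
    ext S
    simp only [Finset.mem_filter, Finset.mem_powerset, Finset.mem_biUnion, Finset.mem_range,
      Finset.mem_powersetCard, Nat.lt_succ_iff]
    constructor
    · rintro ⟨h1, h2⟩; exact ⟨S.card, h2, h1, rfl⟩
    · rintro ⟨k, hk, h1, rfl⟩; exact ⟨h1, hk⟩
  rw [hset, Finset.sum_biUnion]
  · refine Finset.sum_congr rfl fun k _ => ?_
    rw [aa, Finset.mul_sum]
    refine Finset.sum_congr rfl fun S hS => ?_
    have hcard : S.card = k := (Finset.mem_powersetCard.1 hS).2
    rw [Finset.prod_mul_distrib, Finset.prod_const, hcard]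
  · intro k _ l _ hkl
    exact Finset.disjoint_left.2 fun S hS hS' => hkl <|
      ((Finset.mem_powersetCard.1 hS).2.symm.trans (Finset.mem_powersetCard.1 hS').2)

lemma pow_helper {z1 z2 : ℝ} (h1 : 0 ≤ z1) (h12 : z1 ≤ z2) (j m : ℕ) :
    z1 ^ (j + m) * z2 ^ j ≤ z2 ^ (j + m) * z1 ^ j := by
  have hm : z1 ^ m ≤ z2 ^ m := pow_le_pow_left₀ h1 h12 m
  have hj : 0 ≤ z1 ^ j * z2 ^ j := mul_nonneg (pow_nonneg h1 j) (pow_nonneg (h1.trans h12) j)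
  have := mul_le_mul_of_nonneg_left hm hj
  rw [pow_add, pow_add]
  nlinarith [this]

lemma Pmono {α : Type*} [DecidableEq α] (F : Finset α) (X : α → ℝ)
    (hX : ∀ f ∈ F, 0 ≤ X f) (w : ℕ) {z1 z2 : ℝ} (h1 : 0 ≤ z1) (h12 : z1 ≤ z2) :
    (∑ k ∈ Finset.range w, aa F X k * z1 ^ (k+1)) *
      (∑ k ∈ Finset.range (w+1), aa F X k * z2 ^ k)
    ≤ (∑ k ∈ Finset.range w, aa F X k * z2 ^ (k+1)) *
      (∑ k ∈ Finset.range (w+1), aa F X k * z1 ^ k) := by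
  have hann := aa_nonneg hX
  have h2 : (0:ℝ) ≤ z2 := h1.trans h12
  set a : ℕ → ℝ := aa F X with ha
  have e1 : ∀ z z' : ℝ, (∑ k ∈ Finset.range w, a k * z ^ (k+1)) *
      (∑ k ∈ Finset.range (w+1), a k * z' ^ k)
      = ∑ p ∈ Finset.range w ×ˢ Finset.range (w+1),
          a p.1 * a p.2 * (z ^ (p.1+1) * z' ^ p.2) := by
    intro z z'
    rw [Finset.sum_mul_sum, ← Finset.sum_product']
    exact Finset.sum_congr rfl fun p _ => by ring
  rw [e1, e1, ← sub_nonneg, ← Finset.sum_sub_distrib]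
  set I := Finset.range w ×ˢ Finset.range (w+1) with hI
  set G : ℕ × ℕ → ℝ := fun p =>
    a p.1 * a p.2 * (z2 ^ (p.1+1) * z1 ^ p.2) - a p.1 * a p.2 * (z1 ^ (p.1+1) * z2 ^ p.2)
    with hG
  show 0 ≤ ∑ p ∈ I, G p
  -- nonnegativity on the "plus" region
  have tnn : ∀ p : ℕ × ℕ, p.2 ≤ p.1 + 1 → 0 ≤ G p := by
    rintro ⟨k, j⟩ hj
    have hkj : k + 1 = j + (k + 1 - j) := by omega
    have hp := pow_helper h1 h12 j (k + 1 - j)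
    rw [← hkj] at hp
    have hc : 0 ≤ a k * a j := mul_nonneg (hann k) (hann j)
    simp only [hG]
    nlinarith [mul_le_mul_of_nonneg_left hp hc]
  set σ : ℕ × ℕ → ℕ × ℕ := fun p => (p.2 - 1, p.1 + 1) with hσ
  have pairsum : ∀ p : ℕ × ℕ, p.1 + 1 < p.2 → -G (σ p) ≤ G p := by
    rintro ⟨k, j⟩ hj
    obtain ⟨j0, rfl⟩ : ∃ j0, j = j0 + 2 := ⟨j - 2, by omega⟩
    have hkj0 : k ≤ j0 := by omega
    have hgap : a k * a (j0+2) ≤ a (k+1) * a (j0+1) := aa_key X F hX k j0 hkj0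
    have hkm : j0 + 2 = (k+1) + (j0 + 1 - k) := by omega
    have hp := pow_helper h1 h12 (k+1) (j0 + 1 - k)
    rw [← hkm] at hp
    simp only [hG, hσ]
    have hσ1 : (j0 + 2 - 1 : ℕ) = j0 + 1 := by omega
    rw [hσ1]
    nlinarith [mul_nonneg (sub_nonneg.2 hgap) (sub_nonneg.2 hp)]
  have hsplit := Finset.sum_filter_add_sum_filter_not I (fun p => p.2 ≤ p.1 + 1) G
  rw [← hsplit]
  set Ip := I.filter (fun p => p.2 ≤ p.1 + 1) with hIp
  set Im := I.filter (fun p => ¬ p.2 ≤ p.1 + 1) with hIm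
  have hA : 0 ≤ ∑ p ∈ Ip, G p :=
    Finset.sum_nonneg fun p hp => tnn p (Finset.mem_filter.1 hp).2
  have hsub : Im.image σ ⊆ Ip := by
    intro q hq
    obtain ⟨p, hp, rfl⟩ := Finset.mem_image.1 hq
    simp only [hIm, hI, Finset.mem_filter, Finset.mem_product, Finset.mem_range] at hp
    simp only [hIp, hI, hσ, Finset.mem_filter, Finset.mem_product, Finset.mem_range]
    omega
  have hinj : ∀ p ∈ Im, ∀ q ∈ Im, σ p = σ q → p = q := by
    intro p hp q hq hpq
    simp only [hIm, hI, Finset.mem_filter, Finset.mem_product, Finset.mem_range] at hp hq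
    simp only [hσ, Prod.mk.injEq] at hpq
    have : p.1 = q.1 ∧ p.2 = q.2 := by omega
    exact Prod.ext this.1 this.2
  have himg : ∑ p ∈ Im, G (σ p) = ∑ q ∈ Im.image σ, G q := (Finset.sum_image hinj).symm
  have hle1 : ∑ q ∈ Im.image σ, G q ≤ ∑ p ∈ Ip, G p :=
    Finset.sum_le_sum_of_subset_of_nonneg hsub
      (fun p hp _ => tnn p (Finset.mem_filter.1 hp).2)
  have hle2 : ∑ p ∈ Im, (-G (σ p)) ≤ ∑ p ∈ Im, G p :=
    Finset.sum_le_sum fun p hp => pairsum p (by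
      have := (Finset.mem_filter.1 hp).2
      omega)
  rw [Finset.sum_neg_distrib] at hle2
  linarith

/-- `R_e(Y) = (Σ_{S ⊆ E\{e}, |S| ≤ w−1} Y^S) / (Σ_{S ⊆ E\{e}, |S| ≤ w} Y^S)`. -/
noncomputable def Re {α : Type*} [DecidableEq α] (E : Finset α) (w : ℕ) (e : α)
    (Y : α → ℝ) : ℝ :=
  (∑ S ∈ (E.erase e).powerset.filter (fun S => S.card ≤ w - 1), ∏ f ∈ S, Y f) /
  (∑ S ∈ (E.erase e).powerset.filter (fun S => S.card ≤ w), ∏ f ∈ S, Y f)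

/-- `Q_e(X) = (Σ_{S ⊆ E\{e}, |S| = w−1} X^S)/(Σ_{S ⊆ E\{e}, |S| = w} X^S)`. -/
noncomputable def Qe {α : Type*} [DecidableEq α] (E : Finset α) (w : ℕ) (e : α)
    (X : α → ℝ) : ℝ :=
  (∑ S ∈ (E.erase e).powerset.filter (fun S => S.card = w - 1), ∏ f ∈ S, X f) /
  (∑ S ∈ (E.erase e).powerset.filter (fun S => S.card = w), ∏ f ∈ S, X f)

set_option maxHeartbeats 2000000 in
/-- If `|E\{e}| ≥ w`, then `z·R_e(zX)` increases monotonically to `Q_e(X)` as `z → ∞`;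
if `|E\{e}| < w`, then `z·R_e(zX) → ∞` as `z → ∞`. -/
theorem statement_9 {α : Type*} [DecidableEq α] (E : Finset α) (w : ℕ) (hw : 1 ≤ w)
    (e : α) (he : e ∈ E) (X : α → ℝ) (hX : ∀ a ∈ E, 0 < X a ∧ X a ≤ 1) :
    (w ≤ (E.erase e).card →
      MonotoneOn (fun z : ℝ => z * Re E w e (fun a => z * X a)) (Set.Ici 0) ∧
      Filter.Tendsto (fun z : ℝ => z * Re E w e (fun a => z * X a))
        Filter.atTop (nhds (Qe E w e X))) ∧
    ((E.erase e).card < w →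
      Filter.Tendsto (fun z : ℝ => z * Re E w e (fun a => z * X a))
        Filter.atTop Filter.atTop) := by
  
  have hXpos : ∀ f ∈ E.erase e, 0 < X f := fun f hf => (hX f (Finset.mem_of_mem_erase hf)).1
  have hXnn : ∀ f ∈ E.erase e, 0 ≤ X f := fun f hf => (hXpos f hf).le
  have hann : ∀ k, 0 ≤ aa (E.erase e) X k := aa_nonneg hXnn
  -- the basic rewriting of Re
  have hfun : ∀ z : ℝ, Re E w e (fun b => z * X b)
      = (∑ k ∈ Finset.range w, z ^ k * aa (E.erase e) X k) /
        (∑ k ∈ Finset.range (w+1), z ^ k * aa (E.erase e) X k) := by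
    intro z
    unfold Re
    rw [sum_filter_card_le, sum_filter_card_le, Nat.sub_add_cancel hw]
  have hNpos : ∀ z : ℝ, 0 ≤ z →
      0 < ∑ k ∈ Finset.range w, z ^ k * aa (E.erase e) X k := by
    intro z hz
    refine Finset.sum_pos' (fun k _ => mul_nonneg (pow_nonneg hz k) (hann k)) ⟨0, ?_, ?_⟩
    · exact Finset.mem_range.2 hw
    · simp [aa_zero]
  have hDpos : ∀ z : ℝ, 0 ≤ z →
      0 < ∑ k ∈ Finset.range (w+1), z ^ k * aa (E.erase e) X k := by
    intro z hz
    refine Finset.sum_pos' (fun k _ => mul_nonneg (pow_nonneg hz k) (hann k)) ⟨0, ?_, ?_⟩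
    · simp
    · simp [aa_zero]
  constructor
  · intro hn
    have haw : 0 < aa (E.erase e) X w := aa_pos hXpos hn
    have haw1 : 0 < aa (E.erase e) X (w-1) := aa_pos hXpos (by omega)
    constructor
    · -- monotonicity
      intro z1 hz1 z2 hz2 h12
      simp only [Set.mem_Ici] at hz1 hz2
      simp only
      rw [hfun z1, hfun z2, mul_div_assoc', mul_div_assoc',
        div_le_div_iff₀ (hDpos z1 hz1) (hDpos z2 hz2)]
      have hzN : ∀ z : ℝ, z * ∑ k ∈ Finset.range w, z ^ k * aa (E.erase e) X k
          = ∑ k ∈ Finset.range w, aa (E.erase e) X k * z ^ (k+1) := by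
        intro z
        rw [Finset.mul_sum]
        exact Finset.sum_congr rfl fun k _ => by ring
      have hD' : ∀ z : ℝ, ∑ k ∈ Finset.range (w+1), z ^ k * aa (E.erase e) X k
          = ∑ k ∈ Finset.range (w+1), aa (E.erase e) X k * z ^ k :=
        fun z => Finset.sum_congr rfl fun k _ => by ring
      rw [hzN, hzN, hD' z1, hD' z2]
      exact Pmono (E.erase e) X hXnn w hz1 h12
    · -- tendsto to Qe
      have hQe : Qe E w e X = aa (E.erase e) X (w-1) / aa (E.erase e) X w := by
        unfold Qe aa
        rw [← Finset.powersetCard_eq_filter, ← Finset.powersetCard_eq_filter]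
      set a : ℕ → ℝ := aa (E.erase e) X with ha
      have htendu : Tendsto (fun z : ℝ => ∑ k ∈ Finset.range w, a k * (z ^ (w-1-k))⁻¹)
          atTop (𝓝 (a (w-1))) := by
        have h0 : Tendsto (fun z : ℝ => ∑ k ∈ Finset.range w, a k * (z ^ (w-1-k))⁻¹)
            atTop (𝓝 (∑ k ∈ Finset.range w, if k = w-1 then a (w-1) else 0)) := by
          refine tendsto_finset_sum _ fun k hk => ?_
          by_cases hkw : k = w-1
          · subst hkw
            simp only [Nat.sub_self, pow_zero, inv_one, mul_one, if_pos]
            exact tendsto_const_nhds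
          · have hm : w - 1 - k ≠ 0 := by
              have := Finset.mem_range.1 hk; omega
            have hinv : Tendsto (fun z : ℝ => (z ^ (w-1-k))⁻¹) atTop (𝓝 0) :=
              (tendsto_pow_atTop hm).inv_tendsto_atTop
            simpa [hkw] using hinv.const_mul (a k)
        rwa [Finset.sum_ite_eq', if_pos (Finset.mem_range.2 (by omega))] at h0
      have htendv : Tendsto (fun z : ℝ => ∑ k ∈ Finset.range (w+1), a k * (z ^ (w-k))⁻¹)
          atTop (𝓝 (a w)) := by
        have h0 : Tendsto (fun z : ℝ => ∑ k ∈ Finset.range (w+1), a k * (z ^ (w-k))⁻¹)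
            atTop (𝓝 (∑ k ∈ Finset.range (w+1), if k = w then a w else 0)) := by
          refine tendsto_finset_sum _ fun k hk => ?_
          by_cases hkw : k = w
          · subst hkw
            simp only [Nat.sub_self, pow_zero, inv_one, mul_one, if_pos]
            exact tendsto_const_nhds
          · have hm : w - k ≠ 0 := by
              have := Finset.mem_range.1 hk; omega
            have hinv : Tendsto (fun z : ℝ => (z ^ (w-k))⁻¹) atTop (𝓝 0) :=
              (tendsto_pow_atTop hm).inv_tendsto_atTop
            simpa [hkw] using hinv.const_mul (a k)
        rwa [Finset.sum_ite_eq', if_pos (Finset.mem_range.2 (by omega))] at h0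
      have hlim := htendu.div htendv (ne_of_gt haw)
      rw [hQe]
      refine hlim.congr' ?_
      filter_upwards [eventually_gt_atTop (0:ℝ)] with z hz
      simp only [Pi.div_apply]
      have hz0 : z ≠ 0 := ne_of_gt hz
      rw [hfun z]
      have e1 : (∑ k ∈ Finset.range w, a k * (z ^ (w-1-k))⁻¹) * z ^ w
          = z * ∑ k ∈ Finset.range w, z ^ k * a k := by
        rw [Finset.sum_mul, Finset.mul_sum]
        refine Finset.sum_congr rfl fun k hk => ?_
        have hk' := Finset.mem_range.1 hk
        have hsplit : (z:ℝ) ^ w = z ^ (w-1-k) * z ^ (k+1) := by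
          rw [← pow_add]; congr 1; omega
        rw [hsplit]
        field_simp
        ring
      have e2 : (∑ k ∈ Finset.range (w+1), a k * (z ^ (w-k))⁻¹) * z ^ w
          = ∑ k ∈ Finset.range (w+1), z ^ k * a k := by
        rw [Finset.sum_mul]
        refine Finset.sum_congr rfl fun k hk => ?_
        have hk' := Finset.mem_range.1 hk
        have hsplit : (z:ℝ) ^ w = z ^ (w-k) * z ^ k := by
          rw [← pow_add]; congr 1; omega
        rw [hsplit]
        field_simp
      have hzw : (z:ℝ) ^ w ≠ 0 := pow_ne_zero w hz0
      calc (∑ k ∈ Finset.range w, a k * (z ^ (w-1-k))⁻¹) /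
            (∑ k ∈ Finset.range (w+1), a k * (z ^ (w-k))⁻¹)
          = ((∑ k ∈ Finset.range w, a k * (z ^ (w-1-k))⁻¹) * z ^ w) /
            ((∑ k ∈ Finset.range (w+1), a k * (z ^ (w-k))⁻¹) * z ^ w) :=
            (mul_div_mul_right _ _ hzw).symm
        _ = (z * ∑ k ∈ Finset.range w, z ^ k * a k) /
            (∑ k ∈ Finset.range (w+1), z ^ k * a k) := by rw [e1, e2]
        _ = z * ((∑ k ∈ Finset.range w, z ^ k * a k) /
            (∑ k ∈ Finset.range (w+1), z ^ k * a k)) := by rw [mul_div_assoc]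
  · intro hn
    have haw0 : aa (E.erase e) X w = 0 := by
      unfold aa
      rw [Finset.powersetCard_eq_empty.2 hn]
      simp
    have heq : ∀ z : ℝ, 0 < z → z * Re E w e (fun b => z * X b) = z := by
      intro z hz
      rw [hfun z, Finset.sum_range_succ, haw0, mul_zero, add_zero,
        div_self (ne_of_gt (hNpos z hz.le)), mul_one]
    refine Tendsto.congr' ?_ tendsto_id
    filter_upwards [eventually_gt_atTop (0:ℝ)] with z hz
    exact (heq z hz).symm
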